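/- arXiv:2209.05979 — 3 statements merged into one kernel-verified Lean document; each statement's English description precedes it below -/
import Mathlib

section
/- Let V_N : S → [0,∞] be the indicator function of 𝕊, and for k = N−1, N−2, …, 0 define recursively V_k(s) = ∫_𝕊 V_{k+1}(s') κ_k(s, ds') (integral over the safe set 𝕊). Then for every k and every s ∈ S, V_k(s) equals the probability that s_{k+1}, …, s_N all lie in 𝕊 for the Markov chain with transition kernels κ_k, …, κ_{N−1} started at s_k = s; in particular, V_0(s₀) equals the MWPS from s₀. -/
open MeasureTheory ProbabilityTheory
open scoped ENNReal

/-- The joint law of the trajectory `(s_k, s_{k+1}, …, s_{k+n})` of the Markov chain with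
transition kernels `κ_k, κ_{k+1}, …` started deterministically at `s_k = s`, obtained by the
iterated composition-product of the kernels (i.e. `s_{j+1} ∼ κ_j(s_j, ·)`).  The trajectory is
recorded as a function `Fin (n+1) → S`, index `i` corresponding to time `k + i`. -/
noncomputable def trajLaw {S : Type*} [MeasurableSpace S] (κ : ℕ → Kernel S S) (k : ℕ) (s : S) :
    (n : ℕ) → Measure (Fin (n + 1) → S)
  | 0 => Measure.dirac (fun _ => s)
  | n + 1 =>
      (trajLaw κ k s n).bind fun p => ((κ (k + n)) (p (Fin.last n))).map (fun x => Fin.snoc p x)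

section Aux

variable {S : Type*} [MeasurableSpace S]

lemma trajLaw_succ (κ : ℕ → Kernel S S) (k : ℕ) (s : S) (n : ℕ) :
    trajLaw κ k s (n + 1)
      = (trajLaw κ k s n).bind
          fun p => ((κ (k + n)) (p (Fin.last n))).map (fun x => Fin.snoc p x) := rfl

lemma measurable_snoc_prod (n : ℕ) :
    Measurable (fun q : (Fin (n + 1) → S) × S => (Fin.snoc q.1 q.2 : Fin (n + 2) → S)) := by
  apply measurable_pi_lambda
  intro i
  refine Fin.lastCases ?_ (fun j => ?_) i
  · simp only [Fin.snoc_last]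
    exact measurable_snd
  · simp only [Fin.snoc_castSucc]
    exact (measurable_pi_apply j).comp measurable_fst

lemma measA {𝕊 : Set S} (h𝕊 : MeasurableSet 𝕊) (n : ℕ) :
    MeasurableSet {p : Fin (n + 1) → S | ∀ i, i ≠ 0 → p i ∈ 𝕊} := by
  have h : {p : Fin (n + 1) → S | ∀ i, i ≠ 0 → p i ∈ 𝕊}
      = ⋂ i, {p : Fin (n + 1) → S | i ≠ 0 → p i ∈ 𝕊} := by
    ext p; simp [Set.mem_iInter]
  rw [h]
  refine MeasurableSet.iInter fun i => ?_
  by_cases hi : i = 0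
  · simp [hi]
  · have h2 : {p : Fin (n + 1) → S | i ≠ 0 → p i ∈ 𝕊} = (fun p => p i) ⁻¹' 𝕊 := by
      ext p; simp [hi]
    rw [h2]
    exact measurable_pi_apply i h𝕊

lemma snoc_mem_iff {𝕊 : Set S} {n : ℕ} (p : Fin (n + 1) → S) (x : S) :
    (Fin.snoc p x : Fin (n + 2) → S) ∈ {q : Fin (n + 2) → S | ∀ i, i ≠ 0 → q i ∈ 𝕊}
      ↔ p ∈ {q : Fin (n + 1) → S | ∀ i, i ≠ 0 → q i ∈ 𝕊} ∧ x ∈ 𝕊 := by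
  constructor
  · intro h
    refine ⟨fun i hi => ?_, ?_⟩
    · have hne : (i.castSucc : Fin (n + 2)) ≠ 0 := by
        exact Fin.castSucc_ne_zero_iff.mpr hi
      have := h i.castSucc hne
      simpa [Fin.snoc_castSucc] using this
    · have hne : (Fin.last (n + 1) : Fin (n + 2)) ≠ 0 := by
        simp [Fin.ext_iff]
      have := h (Fin.last (n + 1)) hne
      simpa [Fin.snoc_last] using this
  · rintro ⟨hp, hx⟩ i
    refine Fin.lastCases ?_ (fun j => ?_) i
    · intro _; simpa [Fin.snoc_last] using hx
    · intro hj
      have hj0 : j ≠ 0 := by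
        intro h0; apply hj; simp [h0, Fin.ext_iff]
      simpa [Fin.snoc_castSucc] using hp j hj0

lemma step (κ : ℕ → Kernel S S) (hκ : ∀ k, IsMarkovKernel (κ k))
    {𝕊 : Set S} (h𝕊 : MeasurableSet 𝕊) (k n : ℕ) (s : S)
    {f : S → ℝ≥0∞} (hf : Measurable f) :
    (∫⁻ p in {p : Fin (n + 2) → S | ∀ i, i ≠ 0 → p i ∈ 𝕊},
        f (p (Fin.last (n + 1))) ∂(trajLaw κ k s (n + 1)))
      = ∫⁻ p in {p : Fin (n + 1) → S | ∀ i, i ≠ 0 → p i ∈ 𝕊},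
          ∫⁻ x in 𝕊, f x ∂((κ (k + n)) (p (Fin.last n))) ∂(trajLaw κ k s n) := by
  have := hκ (k + n)
  set A1 : Set (Fin (n + 2) → S) := {p | ∀ i, i ≠ 0 → p i ∈ 𝕊} with hA1
  set A0 : Set (Fin (n + 1) → S) := {p | ∀ i, i ≠ 0 → p i ∈ 𝕊} with hA0
  have hφ : Measurable fun q : Fin (n + 2) → S =>
      A1.indicator (fun q => f (q (Fin.last (n + 1)))) q :=
    (hf.comp (measurable_pi_apply _)).indicator (measA h𝕊 _)
  have hg : Measurable fun p : Fin (n + 1) → S =>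
      ((κ (k + n)) (p (Fin.last n))).map (fun x => (Fin.snoc p x : Fin (n + 2) → S)) := by
    apply Measure.measurable_of_measurable_coe
    intro B hB
    have hmap : ∀ p : Fin (n + 1) → S,
        (((κ (k + n)) (p (Fin.last n))).map (fun x => (Fin.snoc p x : Fin (n + 2) → S))) B
          = (κ (k + n)) (p (Fin.last n)) {x | (Fin.snoc p x : Fin (n + 2) → S) ∈ B} := by
      intro p
      have hsnoc : Measurable fun x : S => (Fin.snoc p x : Fin (n + 2) → S) :=
        (measurable_snoc_prod n).comp measurable_prodMk_left
      rw [Measure.map_apply hsnoc hB]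
      rfl
    simp_rw [hmap]
    have hT : MeasurableSet {q : (Fin (n + 1) → S) × S |
        (Fin.snoc q.1 q.2 : Fin (n + 2) → S) ∈ B} := (measurable_snoc_prod n) hB
    exact Kernel.measurable_kernel_prodMk_left
      (κ := (κ (k + n)).comap (fun p : Fin (n + 1) → S => p (Fin.last n))
        (measurable_pi_apply _)) hT
  rw [← lintegral_indicator (measA h𝕊 _), ← lintegral_indicator (measA h𝕊 _),
    trajLaw_succ, Measure.lintegral_bind hg.aemeasurable hφ.aemeasurable]
  refine lintegral_congr fun p => ?_
  have hsnoc : Measurable fun x : S => (Fin.snoc p x : Fin (n + 2) → S) :=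
    (measurable_snoc_prod n).comp measurable_prodMk_left
  rw [lintegral_map hφ hsnoc]
  by_cases hp : p ∈ A0
  · rw [Set.indicator_of_mem hp, ← lintegral_indicator h𝕊]
    refine lintegral_congr fun x => ?_
    by_cases hx : x ∈ 𝕊
    · have hmem : (Fin.snoc p x : Fin (n + 2) → S) ∈ A1 := (snoc_mem_iff p x).mpr ⟨hp, hx⟩
      rw [Set.indicator_of_mem hmem, Set.indicator_of_mem hx]
      simp [Fin.snoc_last]
    · rw [Set.indicator_of_notMem hx, Set.indicator_of_notMem
        (fun h => hx ((snoc_mem_iff p x).mp h).2)]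
  · rw [Set.indicator_of_notMem hp]
    have hz : ∀ x : S,
        A1.indicator (fun q => f (q (Fin.last (n + 1)))) (Fin.snoc p x) = 0 := fun x =>
      Set.indicator_of_notMem (fun h => hp ((snoc_mem_iff p x).mp h).1) _
    simp [hz]

end Aux

/-- If `V_N` is the indicator of the safe set `𝕊` and, backwards for
`k = N-1, …, 0`, `V_k(s) = ∫_𝕊 V_{k+1}(s') κ_k(s, ds')`, then for every `k < N` and every `s`,
`V_k(s)` equals the probability that `s_{k+1}, …, s_N` all lie in `𝕊` for the Markov chain with
kernels `κ_k, …, κ_{N-1}` started at `s_k = s`; in particular `V_0(s₀)` is the mission-wide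
probability of safety from `s₀`. -/
theorem backward_recursion_eq_MWPS
    {S : Type*} [MeasurableSpace S] (N : ℕ) (hN : 1 ≤ N)
    (κ : ℕ → Kernel S S) (hκ : ∀ k, IsMarkovKernel (κ k))
    (𝕊 : Set S) (h𝕊 : MeasurableSet 𝕊)
    (V : ℕ → S → ℝ≥0∞)
    (hVN : ∀ s, V N s = Set.indicator 𝕊 1 s)
    (hVrec : ∀ k < N, ∀ s, V k s = ∫⁻ s' in 𝕊, V (k + 1) s' ∂(κ k s)) :
    ∀ k < N, ∀ s : S,
      V k s = trajLaw κ k s (N - k) {p : Fin (N - k + 1) → S | ∀ i, i ≠ 0 → p i ∈ 𝕊} := by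
  -- measurability of the value functions
  have measVsub : ∀ m : ℕ, Measurable (V (N - m)) := by
    intro m
    induction m with
    | zero =>
      simp only [Nat.sub_zero]
      have hV : V N = 𝕊.indicator 1 := funext hVN
      rw [hV]
      exact measurable_one.indicator h𝕊
    | succ m ih =>
      by_cases h : N - (m + 1) = N - m
      · rw [h]; exact ih
      · have hlt : N - (m + 1) < N := by omega
        have hsucc : N - (m + 1) + 1 = N - m := by omega
        have hV : V (N - (m + 1))
            = fun s => ∫⁻ s' in 𝕊, V (N - m) s' ∂(κ (N - (m + 1)) s) := by
          funext s
          rw [hVrec _ hlt s, hsucc]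
        rw [hV]
        have := hκ (N - (m + 1))
        exact Measurable.setLIntegral_kernel_prod_right
          (f := fun (_ : S) b => V (N - m) b) (ih.comp measurable_snd) h𝕊
  have measV : ∀ j, j ≤ N → Measurable (V j) := by
    intro j hj
    have := measVsub (N - j)
    rwa [Nat.sub_sub_self hj] at this
  -- the key backward induction
  have key : ∀ n k, k + n ≤ N → ∀ s : S,
      (∫⁻ p in {p : Fin (n + 1) → S | ∀ i, i ≠ 0 → p i ∈ 𝕊},
        V (k + n) (p (Fin.last n)) ∂(trajLaw κ k s n)) = V k s := by
    intro n
    induction n with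
    | zero =>
      intro k hk s
      have hA : {p : Fin 1 → S | ∀ i, i ≠ 0 → p i ∈ 𝕊} = Set.univ :=
        Set.eq_univ_iff_forall.mpr fun p i hi => absurd (Subsingleton.elim i 0) hi
      rw [hA, Measure.restrict_univ]
      have : trajLaw κ k s 0 = Measure.dirac (fun _ : Fin 1 => s) := rfl
      have hm : Measurable fun p : Fin 1 → S => V (k + 0) (p (Fin.last 0)) :=
        (measV (k + 0) (by omega)).comp (measurable_pi_apply _)
      rw [this, lintegral_dirac' (fun _ : Fin 1 => s) hm]
      simp
    | succ n ih =>
      intro k hk s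
      have h1 : k + n < N := by omega
      have hstep := step κ hκ h𝕊 k n s (f := V (k + n + 1))
        (measV (k + n + 1) (by omega))
      have hidx : k + (n + 1) = k + n + 1 := by omega
      rw [hidx, hstep]
      have hinner : (∫⁻ p in {p : Fin (n + 1) → S | ∀ i, i ≠ 0 → p i ∈ 𝕊},
          ∫⁻ x in 𝕊, V (k + n + 1) x ∂((κ (k + n)) (p (Fin.last n))) ∂(trajLaw κ k s n))
          = ∫⁻ p in {p : Fin (n + 1) → S | ∀ i, i ≠ 0 → p i ∈ 𝕊},
              V (k + n) (p (Fin.last n)) ∂(trajLaw κ k s n) :=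
        lintegral_congr fun p => (hVrec (k + n) h1 (p (Fin.last n))).symm
      rw [hinner]
      exact ih k (by omega) s
  intro k hk s
  have hn : k + (N - k) = N := by omega
  have hkey := key (N - k) k (by omega) s
  rw [hn] at hkey
  rw [← hkey, ← setLIntegral_one]
  refine setLIntegral_congr_fun (measA h𝕊 _) (fun p hp => ?_)
  have hlastne : (Fin.last (N - k) : Fin (N - k + 1)) ≠ 0 := by
    have : N - k ≠ 0 := by omega
    simp [Fin.ext_iff, this]
  have hmem : p (Fin.last (N - k)) ∈ 𝕊 := hp (Fin.last (N - k)) hlastne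
  rw [hVN, Set.indicator_of_mem hmem]
  rfl
end

section
/- Define the Bellman (dynamic programming) value functions by J_N = g and, for k = N−1, …, 0, J_k(s) = ⨅_{a ∈ A} [ ℓ(s, a) + ∫ J_{k+1}(s') κ((s, a), ds') ], and assume each J_k is measurable. Then for every measurable policy sequence π = (π_0, …, π_{N−1}), every k ∈ {0, …, N}, and every s ∈ S, the policy value dominates the DP value: W^π_k(s) ≥ J_k(s). In particular, ⨅_π W^π_0(s₀) ≥ J_0(s₀) for every s₀ ∈ S. -/
open MeasureTheory ProbabilityTheory
open scoped ENNReal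

/-- Let the Bellman value functions be `J_N = g` and
`J_k(s) = ⨅_{a ∈ A} [ℓ(s,a) + ∫ J_{k+1}(s') κ((s,a), ds')]` for `k = N-1, …, 0`, each `J_k`
measurable.  Then for every measurable policy sequence `π`, the associated policy value
functions `W^π` (defined backwards by `W^π_N = g`,
`W^π_k(s) = ℓ(s, π_k(s)) + ∫ W^π_{k+1}(s') κ((s, π_k(s)), ds')`) dominate the DP values:
`W^π_k(s) ≥ J_k(s)` for all `k ≤ N` and `s`.  In particular,
`⨅_π W^π_0(s₀) ≥ J_0(s₀)` for every `s₀`. -/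
theorem bellman_values_lower_bound_policy_values
    {S A : Type*} [MeasurableSpace S] [MeasurableSpace A] [Nonempty A]
    (κ : Kernel (S × A) S) [IsMarkovKernel κ] (N : ℕ)
    (ℓ : S × A → ℝ≥0∞) (hℓ : Measurable ℓ)
    (g : S → ℝ≥0∞) (hg : Measurable g)
    (J : ℕ → S → ℝ≥0∞)
    (hJN : ∀ s, J N s = g s)
    (hJrec : ∀ k < N, ∀ s,
      J k s = ⨅ a : A, (ℓ (s, a) + ∫⁻ s', J (k + 1) s' ∂(κ (s, a))))
    (hJmeas : ∀ k, Measurable (J k)) :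
    (∀ π : ℕ → S → A, (∀ k, Measurable (π k)) →
      ∀ W : ℕ → S → ℝ≥0∞, (∀ s, W N s = g s) →
        (∀ k < N, ∀ s, W k s = ℓ (s, π k s) + ∫⁻ s', W (k + 1) s' ∂(κ (s, π k s))) →
        ∀ k ≤ N, ∀ s : S, J k s ≤ W k s) ∧
    (∀ s₀ : S,
      J 0 s₀ ≤
        ⨅ (π : ℕ → S → A) (_ : ∀ k, Measurable (π k)) (W : ℕ → S → ℝ≥0∞)
          (_ : ∀ s, W N s = g s)
          (_ : ∀ k < N, ∀ s, W k s = ℓ (s, π k s) + ∫⁻ s', W (k + 1) s' ∂(κ (s, π k s))),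
          W 0 s₀) := by
  have main : ∀ π : ℕ → S → A, (∀ k, Measurable (π k)) →
      ∀ W : ℕ → S → ℝ≥0∞, (∀ s, W N s = g s) →
        (∀ k < N, ∀ s, W k s = ℓ (s, π k s) + ∫⁻ s', W (k + 1) s' ∂(κ (s, π k s))) →
        ∀ k ≤ N, ∀ s : S, J k s ≤ W k s := by
    intro π hπ W hWN hWrec
    have key : ∀ m k, k ≤ N → N - k = m → ∀ s, J k s ≤ W k s := by
      intro m
      induction m with
      | zero =>
        intro k hk hm s
        have : k = N := le_antisymm hk (Nat.le_of_sub_eq_zero hm)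
        subst this
        rw [hJN, hWN]
      | succ m ih =>
        intro k hk hm s
        have hkN : k < N := by omega
        rw [hJrec k hkN, hWrec k hkN]
        refine le_trans (iInf_le _ (π k s)) ?_
        gcongr with s'
        exact ih (k + 1) (by omega) (by omega) s'
    intro k hk s
    exact key (N - k) k hk rfl s
  refine ⟨main, fun s₀ => ?_⟩
  refine le_iInf fun π => le_iInf fun hπ => le_iInf fun W => le_iInf fun hWN =>
    le_iInf fun hWrec => ?_
  exact main π hπ W hWN hWrec 0 (Nat.zero_le _) s₀
end

section
/- Define the Bellman value functions by J_N = g and J_k(s) = ⨅_{a ∈ A} [ ℓ(s, a) + ∫ J_{k+1}(s') κ((s, a), ds') ] for k = N−1, …, 0, and assume each J_k is measurable. Suppose that for each k there exists a measurable selector π*_k : S → A attaining the infimum, i.e. ℓ(s, π*_k(s)) + ∫ J_{k+1}(s') κ((s, π*_k(s)), ds') = J_k(s) for all s ∈ S. Then the policy sequence π* = (π*_0, …, π*_{N−1}) satisfies W^{π*}_k = J_k for every k; consequently, for every s₀ ∈ S, the infimum of W^π_0(s₀) over all measurable policy sequences π equals J_0(s₀), and π* is an optimal policy sequence. -/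
open MeasureTheory ProbabilityTheory
open scoped ENNReal

/-- Let the Bellman value functions be `J_N = g` and
`J_k(s) = ⨅_{a ∈ A} [ℓ(s,a) + ∫ J_{k+1}(s') κ((s,a), ds')]` for `k = N-1, …, 0`, each `J_k`
measurable.  Suppose for each `k` there is a measurable selector `π⋆_k` attaining the infimum:
`ℓ(s, π⋆_k(s)) + ∫ J_{k+1}(s') κ((s, π⋆_k(s)), ds') = J_k(s)` for all `s`.  Then the policy
value functions `W^{π⋆}` of `π⋆` (defined backwards by `W_N = g`,
`W_k(s) = ℓ(s, π⋆_k(s)) + ∫ W_{k+1}(s') κ((s, π⋆_k(s)), ds')`) coincide with `J_k` for every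
`k ≤ N`; consequently, for every `s₀`, the infimum of `W^π_0(s₀)` over all measurable policy
sequences `π` equals `J_0(s₀)`, i.e. `π⋆` is an optimal policy sequence. -/
theorem bellman_selector_is_optimal
    {S A : Type*} [MeasurableSpace S] [MeasurableSpace A] [Nonempty A]
    (κ : Kernel (S × A) S) [IsMarkovKernel κ] (N : ℕ)
    (ℓ : S × A → ℝ≥0∞) (hℓ : Measurable ℓ)
    (g : S → ℝ≥0∞) (hg : Measurable g)
    (J : ℕ → S → ℝ≥0∞)
    (hJN : ∀ s, J N s = g s)
    (hJrec : ∀ k < N, ∀ s,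
      J k s = ⨅ a : A, (ℓ (s, a) + ∫⁻ s', J (k + 1) s' ∂(κ (s, a))))
    (hJmeas : ∀ k, Measurable (J k))
    (πstar : ℕ → S → A) (hπstar : ∀ k, Measurable (πstar k))
    (hsel : ∀ k < N, ∀ s,
      ℓ (s, πstar k s) + ∫⁻ s', J (k + 1) s' ∂(κ (s, πstar k s)) = J k s) :
    (∀ W : ℕ → S → ℝ≥0∞, (∀ s, W N s = g s) →
      (∀ k < N, ∀ s, W k s = ℓ (s, πstar k s) + ∫⁻ s', W (k + 1) s' ∂(κ (s, πstar k s))) →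
      ∀ k ≤ N, ∀ s : S, W k s = J k s) ∧
    (∀ s₀ : S,
      (⨅ (π : ℕ → S → A) (_ : ∀ k, Measurable (π k)) (W : ℕ → S → ℝ≥0∞)
          (_ : ∀ s, W N s = g s)
          (_ : ∀ k < N, ∀ s, W k s = ℓ (s, π k s) + ∫⁻ s', W (k + 1) s' ∂(κ (s, π k s))),
          W 0 s₀) = J 0 s₀) := by

  constructor
  · intro W hWN hWrec
    have key : ∀ d k, k + d = N → ∀ s, W k s = J k s := by
      intro d
      induction d with
      | zero =>
        intro k hk s
        simp only [Nat.add_zero] at hk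
        subst hk
        rw [hWN, hJN]
      | succ d ih =>
        intro k hk s
        have hkN : k < N := by omega
        rw [hWrec k hkN s, ← hsel k hkN s]
        congr 1
        exact lintegral_congr fun s' => ih (k + 1) (by omega) s'
    intro k hk s
    exact key (N - k) k (by omega) s
  · intro s₀
    apply le_antisymm
    · refine iInf_le_of_le πstar (iInf_le_of_le hπstar ?_)
      refine iInf_le_of_le J (iInf_le_of_le hJN ?_)
      exact iInf_le_of_le (fun k hk s => (hsel k hk s).symm) le_rfl
    · refine le_iInf fun π => le_iInf fun hπ => le_iInf fun W => le_iInf fun hWN =>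
        le_iInf fun hWrec => ?_
      have key : ∀ d k, k + d = N → ∀ s, J k s ≤ W k s := by
        intro d
        induction d with
        | zero =>
          intro k hk s
          simp only [Nat.add_zero] at hk
          subst hk
          rw [hWN, hJN]
        | succ d ih =>
          intro k hk s
          have hkN : k < N := by omega
          rw [hWrec k hkN s, hJrec k hkN s]
          refine le_trans (iInf_le _ (π k s)) ?_
          exact add_le_add_right (lintegral_mono fun s' => ih (k + 1) (by omega) s') _
      exact key N 0 (by omega) s₀
end
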